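/- Let n ∈ ℕ, A ∈ Mₙ(ℝ) and α̂ ∈ (0,1]ⁿ. Suppose that σ_{α̂}(A) ⊆ ℂ₋ and that λ_min(−(A + Aᵀ)) > 0, where λ_min(−(A + Aᵀ)) is the smallest eigenvalue of the real symmetric matrix −(A + Aᵀ). Then δ²_{α̂}(A) ≥ (1/2)·λ_min(−(A + Aᵀ)) > 0. -/

import Mathlib

/-- The matrix `diag(z^{α₁},…,z^{αₙ}) - M`, with complex powers in the principal branch
(`Complex.cpow`, whose argument lies in `(-π, π]`). -/
noncomputable def fracMat {n : ℕ} (α : Fin n → ℝ) (M : Matrix (Fin n) (Fin n) ℂ) (z : ℂ) :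
    Matrix (Fin n) (Fin n) ℂ :=
  Matrix.diagonal (fun i => z ^ (α i : ℂ)) - M

/-- The `α`-order spectrum of a (complex) matrix `M`. -/
noncomputable def fracSpec {n : ℕ} (α : Fin n → ℝ) (M : Matrix (Fin n) (Fin n) ℂ) : Set ℂ :=
  {z : ℂ | (fracMat α M z).det = 0}

/-- Matrix operator norm induced by a vector norm `N`. -/
noncomputable def matOpNorm {n : ℕ} (N : (Fin n → ℂ) → ℝ) (M : Matrix (Fin n) (Fin n) ℂ) : ℝ :=
  sSup {t : ℝ | ∃ v : Fin n → ℂ, N v = 1 ∧ t = N (M.mulVec v)}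

/-- `‖M⁻¹‖⁻¹` with the convention that it equals `0` iff `det M = 0`. -/
noncomputable def resInvNorm {n : ℕ} (N : (Fin n → ℂ) → ℝ) (M : Matrix (Fin n) (Fin n) ℂ) : ℝ :=
  if M.det = 0 then 0 else (matOpNorm N M⁻¹)⁻¹

/-- The `α`-order `ε`-pseudospectrum w.r.t. the vector norm `N`. -/
noncomputable def pseudoSpec {n : ℕ} (N : (Fin n → ℂ) → ℝ) (α : Fin n → ℝ) (ε : ℝ)
    (M : Matrix (Fin n) (Fin n) ℂ) : Set ℂ :=
  {z : ℂ | resInvNorm N (fracMat α M z) ≤ ε}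

/-- The Euclidean norm on `Fin n → ℂ`. -/
noncomputable def eucNorm {n : ℕ} (v : Fin n → ℂ) : ℝ :=
  Real.sqrt (∑ i, ‖v i‖ ^ 2)

/-- The matrix norm `‖·‖₂` induced by the Euclidean norm. -/
noncomputable def l2OpNorm {n : ℕ} (M : Matrix (Fin n) (Fin n) ℂ) : ℝ :=
  matOpNorm eucNorm M

/-- The `α`-order `ε`-pseudospectrum `σ²_{α,ε}` w.r.t. the Euclidean norm. -/
noncomputable def pseudoSpec2 {n : ℕ} (α : Fin n → ℝ) (ε : ℝ)
    (M : Matrix (Fin n) (Fin n) ℂ) : Set ℂ :=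
  pseudoSpec eucNorm α ε M

/-- `δ²_{α}(A) := inf{‖E‖₂ : E ∈ Mₙ(ℂ), σ_α(A+E) ∩ ℂ_{≥0} ≠ ∅}`. -/
noncomputable def delta2 {n : ℕ} (α : Fin n → ℝ) (A : Matrix (Fin n) (Fin n) ℝ) : ℝ :=
  sInf {r : ℝ | ∃ E : Matrix (Fin n) (Fin n) ℂ, l2OpNorm E = r ∧
    ∃ z ∈ fracSpec α (A.map (fun a => (a : ℂ)) + E), 0 ≤ z.re}

/-- `β̂` is an `ε`-rational approximation of `α̂` associated with `A` (Definition 4.1):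
(i) each `β_i` is rational with `0 < β_i ≤ α_i ≤ 1`;
(ii) some `R ≥ 1` excludes both Euclidean `ε`-pseudospectra from `{|z| > R}`;
(iii) some `ρ ∈ (0,1)` excludes both spectra from `{|z| < ρ}`;
(iv) for these `R, ρ`: `sup_{ρ ≤ |z| ≤ R} |z^{α_i} − z^{β_i}| < ε` for all `i`. -/
def IsRatApprox {n : ℕ} (A : Matrix (Fin n) (Fin n) ℝ) (α : Fin n → ℝ) (ε : ℝ)
    (β : Fin n → ℝ) : Prop :=
  (∀ i, ∃ r : ℚ, (r : ℝ) = β i) ∧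
  (∀ i, 0 < β i ∧ β i ≤ α i ∧ α i ≤ 1) ∧
  ∃ R : ℝ, 1 ≤ R ∧ ∃ ρ : ℝ, ρ ∈ Set.Ioo (0 : ℝ) 1 ∧
    pseudoSpec2 α ε (A.map (fun a => (a : ℂ))) ∩ {z : ℂ | R < ‖z‖} = ∅ ∧
    pseudoSpec2 β ε (A.map (fun a => (a : ℂ))) ∩ {z : ℂ | R < ‖z‖} = ∅ ∧
    fracSpec α (A.map (fun a => (a : ℂ))) ∩ {z : ℂ | ‖z‖ < ρ} = ∅ ∧
    fracSpec β (A.map (fun a => (a : ℂ))) ∩ {z : ℂ | ‖z‖ < ρ} = ∅ ∧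
    ∀ i, sSup {t : ℝ | ∃ z : ℂ, ρ ≤ ‖z‖ ∧ ‖z‖ ≤ R ∧
      t = ‖z ^ (α i : ℂ) - z ^ (β i : ℂ)‖} < ε

open Matrix Complex Real
open scoped ComplexOrder

noncomputable def toE {n : ℕ} (v : Fin n → ℂ) : EuclideanSpace ℂ (Fin n) :=
  (WithLp.equiv 2 (Fin n → ℂ)).symm v

lemma eucNorm_eq_norm {n : ℕ} (v : Fin n → ℂ) : eucNorm v = ‖toE v‖ := by
  rw [EuclideanSpace.norm_eq]
  simp [eucNorm, toE]

lemma re_dot_le {n : ℕ} (v w : Fin n → ℂ) :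
    (star v ⬝ᵥ w).re ≤ eucNorm v * eucNorm w := by
  have h := norm_inner_le_norm (𝕜 := ℂ) (toE v) (toE w)
  unfold toE at h
  rw [WithLp.equiv_symm_apply, EuclideanSpace.inner_toLp_toLp, dotProduct_comm] at h
  calc (star v ⬝ᵥ w).re ≤ ‖star v ⬝ᵥ w‖ := Complex.re_le_norm _
    _ ≤ _ := by rw [eucNorm_eq_norm, eucNorm_eq_norm]; exact h

lemma dot_self_eq {n : ℕ} (v : Fin n → ℂ) :
    star v ⬝ᵥ v = ((∑ i, ‖v i‖ ^ 2 : ℝ) : ℂ) := by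
  simp only [dotProduct, Pi.star_apply, Complex.star_def]
  push_cast
  congr 1
  funext i
  rw [mul_comm, Complex.mul_conj]
  norm_cast
  rw [Complex.sq_norm]

lemma eucNorm_smul {n : ℕ} (c : ℂ) (v : Fin n → ℂ) :
    eucNorm (c • v) = ‖c‖ * eucNorm v := by
  unfold eucNorm
  rw [← Real.sqrt_sq (norm_nonneg c), ← Real.sqrt_mul (sq_nonneg _), Finset.mul_sum]
  congr 1
  exact Finset.sum_congr rfl fun i _ => by simp [mul_pow]

lemma rayleigh_lower {n : ℕ} (S : Matrix (Fin n) (Fin n) ℝ) (hS : Sᵀ = S)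
    (lam : ℝ)
    (hmin : ∀ μ : ℝ, (∃ v : Fin n → ℝ, v ≠ 0 ∧ S *ᵥ v = μ • v) → lam ≤ μ)
    (v : Fin n → ℂ) :
    (lam : ℂ) * (star v ⬝ᵥ v) ≤ star v ⬝ᵥ (S.map (fun a => (a : ℂ))) *ᵥ v := by
  classical
  set Sc := S.map (fun a => (a : ℂ)) with hScdef
  have hSc : Sc.IsHermitian := by
    unfold Matrix.IsHermitian
    ext i j
    simp only [conjTranspose_apply, hScdef, Matrix.map_apply, Complex.star_def,
      Complex.conj_ofReal]
    norm_cast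
    exact (congrFun (congrFun hS i) j)
  set T := Sc - (lam : ℂ) • 1 with hTdef
  have hT : T.IsHermitian := by
    unfold Matrix.IsHermitian
    rw [hTdef, conjTranspose_sub, conjTranspose_smul, conjTranspose_one, hSc]
    norm_num
  have heig : ∀ i, 0 ≤ hT.eigenvalues i := by
    intro i
    set w : Fin n → ℂ := ⇑(hT.eigenvectorBasis i) with hw
    have hw0 : w ≠ 0 := by simpa [hw] using hT.eigenvectorBasis.orthonormal.ne_zero i
    set ν := hT.eigenvalues i with hν
    have hmv : T *ᵥ w = ν • w := hT.mulVec_eigenvectorBasis i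
    have hScw : Sc *ᵥ w = fun j => ((ν + lam : ℝ) : ℂ) * w j := by
      have h1 : T *ᵥ w = Sc *ᵥ w - (lam : ℂ) • w := by
        rw [hTdef, sub_mulVec, smul_mulVec, one_mulVec]
      funext j
      have := congrFun (h1.symm.trans hmv) j
      have h2 : (Sc *ᵥ w) j - (lam : ℂ) * w j = ν • w j := by
        simpa using this
      push_cast
      rw [Complex.real_smul] at h2
      linear_combination h2
    set x : Fin n → ℝ := fun j => (w j).re with hx
    set y : Fin n → ℝ := fun j => (w j).im with hy
    have hmvx : S *ᵥ x = (ν + lam) • x := by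
      funext j
      have h1 := congrArg Complex.re (congrFun hScw j)
      simpa [mulVec, dotProduct, hScdef, Matrix.map_apply, Complex.re_sum, Complex.mul_re,
        hx, Pi.smul_apply, smul_eq_mul] using h1
    have hmvy : S *ᵥ y = (ν + lam) • y := by
      funext j
      have h1 := congrArg Complex.im (congrFun hScw j)
      simpa [mulVec, dotProduct, hScdef, Matrix.map_apply, Complex.im_sum, Complex.mul_im,
        hy, Pi.smul_apply, smul_eq_mul] using h1
    have hxy : x ≠ 0 ∨ y ≠ 0 := by
      by_contra hc
      push_neg at hc
      apply hw0
      funext j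
      have h1 : x j = 0 := by rw [hc.1]; rfl
      have h2 : y j = 0 := by rw [hc.2]; rfl
      exact Complex.ext h1 h2
    have hle : lam ≤ ν + lam := by
      rcases hxy with h | h
      · exact hmin _ ⟨x, h, hmvx⟩
      · exact hmin _ ⟨y, h, hmvy⟩
    linarith
  have hpsd : T.PosSemidef := hT.posSemidef_iff_eigenvalues_nonneg.mpr heig
  have h0 := hpsd.dotProduct_mulVec_nonneg v
  have hTv : star v ⬝ᵥ T *ᵥ v = star v ⬝ᵥ Sc *ᵥ v - (lam : ℂ) * (star v ⬝ᵥ v) := by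
    rw [hTdef, sub_mulVec, smul_mulVec, one_mulVec, dotProduct_sub, dotProduct_smul]
    rfl
  rw [hTv] at h0
  exact sub_nonneg.mp h0

lemma re_cpow_nonneg {z : ℂ} (hz : 0 ≤ z.re) {a : ℝ} (ha : 0 < a) (ha1 : a ≤ 1) :
    0 ≤ (z ^ (a : ℂ)).re := by
  rcases eq_or_ne z 0 with rfl | hz0
  · rw [Complex.zero_cpow (by exact_mod_cast ha.ne')]; exact le_refl _
  · rw [Complex.cpow_def_of_ne_zero hz0, Complex.exp_re]
    apply mul_nonneg (Real.exp_pos _).le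
    apply Real.cos_nonneg_of_mem_Icc
    have harg : |z.arg| ≤ Real.pi / 2 := Complex.abs_arg_le_pi_div_two_iff.mpr hz
    rw [abs_le] at harg
    have him : (Complex.log z * (a : ℂ)).im = z.arg * a := by
      simp [Complex.mul_im, Complex.log_im]
    rw [him]
    have hpi : (0:ℝ) < Real.pi := Real.pi_pos
    constructor <;> nlinarith [harg.1, harg.2]

lemma eucNorm_mulVec_le {n : ℕ} (M : Matrix (Fin n) (Fin n) ℂ) (v : Fin n → ℂ)
    (hv : eucNorm v = 1) : eucNorm (M *ᵥ v) ≤ l2OpNorm M := by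
  have bdd : BddAbove {t : ℝ | ∃ v : Fin n → ℂ, eucNorm v = 1 ∧ t = eucNorm (M.mulVec v)} := by
    refine ⟨‖Matrix.toEuclideanCLM (𝕜 := ℂ) M‖, ?_⟩
    rintro t ⟨u, hu, rfl⟩
    have key : eucNorm (M *ᵥ u) = ‖Matrix.toEuclideanCLM (𝕜 := ℂ) M (toE u)‖ := by
      rw [eucNorm_eq_norm]
      unfold toE
      rw [WithLp.equiv_symm_apply, Matrix.toEuclideanCLM_toLp]
    rw [key]
    calc ‖Matrix.toEuclideanCLM (𝕜 := ℂ) M (toE u)‖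
        ≤ ‖Matrix.toEuclideanCLM (𝕜 := ℂ) M‖ * ‖toE u‖ :=
          ContinuousLinearMap.le_opNorm _ _
      _ = _ := by rw [← eucNorm_eq_norm, hu, mul_one]
  exact le_csSup bdd ⟨v, hv, rfl⟩

lemma re_dot_mulVec_le {n : ℕ} (E : Matrix (Fin n) (Fin n) ℂ) (v : Fin n → ℂ) :
    (star v ⬝ᵥ E *ᵥ v).re ≤ l2OpNorm E * (∑ i, ‖v i‖ ^ 2) := by
  rcases eq_or_ne v 0 with rfl | hvne
  · simp
  · set c := eucNorm v with hc
    have hsum : (0:ℝ) < ∑ i, ‖v i‖ ^ 2 := by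
      obtain ⟨i, hi⟩ : ∃ i, v i ≠ 0 := by
        by_contra h; push_neg at h; exact hvne (funext h)
      exact Finset.sum_pos' (fun j _ => sq_nonneg _)
        ⟨i, Finset.mem_univ i, pow_pos (norm_pos_iff.mpr hi) 2⟩
    have hcpos : 0 < c := Real.sqrt_pos.mpr hsum
    have hcsq : c ^ 2 = ∑ i, ‖v i‖ ^ 2 := Real.sq_sqrt (le_of_lt hsum)
    set u := ((c : ℂ))⁻¹ • v with hu
    have habs : ‖((c : ℂ)⁻¹)‖ = c⁻¹ := by
      rw [norm_inv, Complex.norm_real, Real.norm_eq_abs, abs_of_pos hcpos]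
    have hunorm : eucNorm u = 1 := by
      rw [hu, eucNorm_smul, habs, ← hc]
      field_simp
    have hveq : v = (c : ℂ) • u := by
      rw [hu, smul_smul, mul_inv_cancel₀ (by exact_mod_cast hcpos.ne'), one_smul]
    have hEv : eucNorm (E *ᵥ v) = c * eucNorm (E *ᵥ u) := by
      conv_lhs => rw [hveq]
      rw [mulVec_smul, eucNorm_smul, Complex.norm_real, Real.norm_eq_abs, abs_of_pos hcpos]
    calc (star v ⬝ᵥ E *ᵥ v).re ≤ eucNorm v * eucNorm (E *ᵥ v) := re_dot_le _ _
      _ = c * (c * eucNorm (E *ᵥ u)) := by rw [← hc, hEv]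
      _ ≤ c * (c * l2OpNorm E) := by
          apply mul_le_mul_of_nonneg_left _ hcpos.le
          exact mul_le_mul_of_nonneg_left (eucNorm_mulVec_le E u hunorm) hcpos.le
      _ = l2OpNorm E * (∑ i, ‖v i‖ ^ 2) := by
          rw [← hcsq]; ring

lemma re_dot_transpose {n : ℕ} (A : Matrix (Fin n) (Fin n) ℝ) (v : Fin n → ℂ) :
    (star v ⬝ᵥ (Aᵀ.map (fun a => (a:ℂ))) *ᵥ v).re
      = (star v ⬝ᵥ (A.map (fun a => (a:ℂ))) *ᵥ v).re := by
  simp only [dotProduct, mulVec, Pi.star_apply, Complex.star_def, Matrix.map_apply,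
    Matrix.transpose_apply, Complex.re_sum, Finset.mul_sum]
  rw [Finset.sum_comm]
  refine Finset.sum_congr rfl fun i _ => Finset.sum_congr rfl fun j _ => ?_
  simp only [Complex.mul_re, Complex.mul_im, Complex.conj_re, Complex.conj_im,
    Complex.ofReal_re, Complex.ofReal_im]
  ring


/-- Proposition 4.2: if `σ_{α̂}(A) ⊆ ℂ₋` and the smallest eigenvalue `λ` of
the real symmetric matrix `−(A + Aᵀ)` is positive, then `δ²_{α̂}(A) ≥ λ/2 > 0`. -/
theorem delta2_ge_half_lambda_min
    {n : ℕ} (A : Matrix (Fin n) (Fin n) ℝ) (α : Fin n → ℝ)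
    (hα : ∀ i, α i ∈ Set.Ioc (0 : ℝ) 1)
    (hspec : fracSpec α (A.map (fun a => (a : ℂ))) ⊆ {z : ℂ | z.re < 0})
    (lam : ℝ)
    (hlam_eig : ∃ v : Fin n → ℝ, v ≠ 0 ∧ (-(A + A.transpose)).mulVec v = lam • v)
    (hlam_min : ∀ μ : ℝ, (∃ v : Fin n → ℝ, v ≠ 0 ∧ (-(A + A.transpose)).mulVec v = μ • v) →
      lam ≤ μ)
    (hlam_pos : 0 < lam) :
    delta2 α A ≥ lam / 2 ∧ 0 < lam / 2  := by
  have hl2 : 0 < lam / 2 := by linarith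
  refine ⟨?_, hl2⟩
  obtain ⟨v0, hv0, _⟩ := hlam_eig
  have hn : Nonempty (Fin n) := by
    by_contra h
    exact hv0 (funext fun i => absurd ⟨i⟩ h)
  set Ac := A.map (fun a => (a : ℂ)) with hAc
  have hne : l2OpNorm (1 - Ac) ∈ {r : ℝ | ∃ E : Matrix (Fin n) (Fin n) ℂ, l2OpNorm E = r ∧
      ∃ z ∈ fracSpec α (Ac + E), 0 ≤ z.re} := by
    refine ⟨1 - Ac, rfl, 1, ?_, by norm_num⟩
    unfold fracSpec fracMat
    simp only [Set.mem_setOf_eq]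
    have hz : Matrix.diagonal (fun i => (1:ℂ) ^ (α i : ℂ)) - (Ac + (1 - Ac)) = 0 := by
      have h1 : (fun i => (1:ℂ) ^ (α i : ℂ)) = fun _ => (1:ℂ) :=
        funext fun i => Complex.one_cpow _
      rw [h1, Matrix.diagonal_one]
      abel
    rw [hz]
    exact Matrix.det_zero
  rw [ge_iff_le]
  unfold delta2
  apply le_csInf ⟨_, hne⟩
  rintro b ⟨E, rfl, z, hzspec, hzre⟩
  obtain ⟨v, hvne, hveq⟩ := (Matrix.exists_mulVec_eq_zero_iff).mpr hzspec
  set d : Fin n → ℂ := fun i => z ^ (α i : ℂ) with hd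
  have hv2 : (Ac + E) *ᵥ v = Matrix.diagonal d *ᵥ v := by
    unfold fracMat at hveq
    rw [Matrix.sub_mulVec] at hveq
    exact (sub_eq_zero.mp hveq).symm
  set s := ∑ i, ‖v i‖ ^ 2 with hs
  have hspos : (0:ℝ) < s := by
    obtain ⟨i, hi⟩ : ∃ i, v i ≠ 0 := by
      by_contra h; push_neg at h; exact hvne (funext h)
    exact Finset.sum_pos' (fun j _ => sq_nonneg _)
      ⟨i, Finset.mem_univ i, pow_pos (norm_pos_iff.mpr hi) 2⟩
  have hdiag : 0 ≤ (star v ⬝ᵥ Matrix.diagonal d *ᵥ v).re := by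
    have hform : star v ⬝ᵥ Matrix.diagonal d *ᵥ v
        = ∑ i, d i * ((‖v i‖ ^ 2 : ℝ) : ℂ) := by
      simp only [dotProduct, Matrix.mulVec_diagonal, Pi.star_apply, Complex.star_def]
      refine Finset.sum_congr rfl fun i _ => ?_
      have h1 : (starRingEnd ℂ) (v i) * (d i * v i) = d i * (v i * (starRingEnd ℂ) (v i)) := by
        ring
      rw [h1, Complex.mul_conj]
      norm_cast
      rw [Complex.sq_norm]
    rw [hform, Complex.re_sum]
    apply Finset.sum_nonneg
    intro i _
    have h2 : (d i * ((‖v i‖ ^ 2 : ℝ) : ℂ)).re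
        = (d i).re * ‖v i‖ ^ 2 := by
      simp [Complex.mul_re, ← Complex.ofReal_pow, Complex.ofReal_re, Complex.ofReal_im]
    rw [h2]
    exact mul_nonneg (re_cpow_nonneg hzre (hα i).1 (hα i).2) (sq_nonneg _)
  have hA_le : (star v ⬝ᵥ Ac *ᵥ v).re ≤ -(lam / 2) * s := by
    have hSsymm : (-(A + Aᵀ))ᵀ = -(A + Aᵀ) := by
      rw [Matrix.transpose_neg, Matrix.transpose_add, Matrix.transpose_transpose, add_comm]
    have hray := rayleigh_lower (-(A + Aᵀ)) hSsymm lam hlam_min v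
    have hre := (Complex.le_def.mp hray).1
    have hmapeq : ((-(A + Aᵀ)).map (fun a => (a:ℂ)))
        = -(Ac + Aᵀ.map (fun a => (a:ℂ))) := by
      ext i j
      simp only [Matrix.map_apply, Matrix.neg_apply, Matrix.add_apply, hAc]
      push_cast
      ring
    have hlhs : ((lam : ℂ) * (star v ⬝ᵥ v)).re = lam * s := by
      rw [dot_self_eq, ← Complex.ofReal_mul, Complex.ofReal_re, hs]
    rw [hmapeq, Matrix.neg_mulVec, dotProduct_neg, Matrix.add_mulVec, dotProduct_add] at hre
    rw [hlhs, Complex.neg_re, Complex.add_re] at hre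
    have htr := re_dot_transpose A v
    rw [htr] at hre
    linarith
  have hE_le : (star v ⬝ᵥ E *ᵥ v).re ≤ l2OpNorm E * s := re_dot_mulVec_le E v
  have hsum : (star v ⬝ᵥ (Ac + E) *ᵥ v).re
      = (star v ⬝ᵥ Ac *ᵥ v).re + (star v ⬝ᵥ E *ᵥ v).re := by
    rw [Matrix.add_mulVec, dotProduct_add, Complex.add_re]
  rw [hv2] at hsum
  nlinarith [hdiag, hA_le, hE_le, hspos]
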